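/- Let b ≥ 2 be an integer, S a non-empty finite set of primes none of which divides b, and a'/d' ∈ [0,1) a rational number with gcd(a', d') = 1. Then for any ε > 0, there exists a positive number D such that for any a/d ∈ ℤ_S ∩ [0,1) with gcd(aa', dd') = 1 and d > D, the orbit {T_b^i(aa'/(dd')) : i ≥ 0} is ε-dense in [0,1]. -/

import Mathlib

/-- The map `T_b : x ↦ bx (mod 1)`, i.e. the fractional part of `bx`. -/
noncomputable def Tb (b : ℕ) (x : ℝ) : ℝ := Int.fract ((b : ℝ) * x)


open Finset

lemma nat_geom (x n : ℕ) (hx : 1 ≤ x) :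
    x ^ n - 1 = (x - 1) * ∑ j ∈ Finset.range n, x ^ j := by
  have h1 : (1:ℕ) ≤ x ^ n := Nat.one_le_pow _ _ hx
  have hg := geom_sum_mul (x : ℤ) n
  zify [h1, hx]
  linarith [hg]

lemma binom_modeq (w j : ℕ) : (1 + w)^j ≡ 1 + j*w [MOD w^2] := by
  induction j with
  | zero => simp [Nat.ModEq.refl]
  | succ j ih =>
    have h0 : j * w^2 ≡ 0 [MOD w^2] := Nat.modEq_zero_iff_dvd.2 (dvd_mul_left _ _)
    calc (1+w)^(j+1) = (1+w)^j * (1+w) := pow_succ _ _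
      _ ≡ (1 + j*w) * (1+w) [MOD w^2] := ih.mul_right _
      _ = 1 + (j+1)*w + j*(w^2) := by ring
      _ ≡ 1 + (j+1)*w + 0 [MOD w^2] := (Nat.ModEq.refl _).add h0
      _ = 1 + (j+1)*w := by ring

lemma modeq_sum {n : ℕ} (s : Finset ℕ) (f g : ℕ → ℕ) (h : ∀ j ∈ s, f j ≡ g j [MOD n]) :
    (∑ j ∈ s, f j) ≡ (∑ j ∈ s, g j) [MOD n] := by
  induction s using Finset.induction with
  | empty => rfl
  | insert _ _ hx ih =>
    rw [Finset.sum_insert hx, Finset.sum_insert hx]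
    exact (h _ (Finset.mem_insert_self _ _)).add (ih fun j hj => h j (Finset.mem_insert_of_mem hj))

lemma sum_pow_modeq (w p : ℕ) :
    (∑ j ∈ Finset.range p, (1 + w)^j) ≡ p + (∑ j ∈ Finset.range p, j) * w [MOD w^2] := by
  calc (∑ j ∈ Finset.range p, (1 + w)^j) ≡ (∑ j ∈ Finset.range p, (1 + j*w)) [MOD w^2] :=
        modeq_sum _ _ _ (fun j _ => binom_modeq w j)
    _ = p + (∑ j ∈ Finset.range p, j) * w := by
        rw [Finset.sum_add_distrib, Finset.sum_mul]
        simp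

lemma step_val {p : ℕ} (hp : p.Prime) {y : ℕ} (hy : 2 ≤ y) (h1 : p ∣ y - 1) (h4 : p = 2 → 4 ∣ y - 1) :
    (y ^ p - 1).factorization p ≤ (y - 1).factorization p + 1 := by
  have hp2 := hp.two_le
  set w := y - 1 with hw
  have hw0 : w ≠ 0 := by omega
  have hyw : y = 1 + w := by omega
  set S := ∑ j ∈ Finset.range p, y ^ j with hSdef
  have hS : y ^ p - 1 = w * S := nat_geom y p (by omega)
  have hS0 : S ≠ 0 := by
    have : 0 < S := Finset.sum_pos (fun j _ => pow_pos (by omega) j) ⟨0, Finset.mem_range.2 (by omega)⟩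
    omega
  have hSp : ¬ p ^ 2 ∣ S := by
    have hmod : S ≡ p + (∑ j ∈ Finset.range p, j) * w [MOD w^2] := by
      rw [hSdef, hyw]; exact sum_pow_modeq w p
    have hTw : p ^ 2 ∣ (∑ j ∈ Finset.range p, j) * w := by
      rcases eq_or_ne p 2 with h2 | hodd
      · subst h2
        simpa [Finset.sum_range_succ] using h4 rfl
      · have hT2 : (∑ j ∈ Finset.range p, j) * 2 = p * (p - 1) := Finset.sum_range_id_mul_two p
        have hpT : p ∣ (∑ j ∈ Finset.range p, j) := by
          have : p ∣ (∑ j ∈ Finset.range p, j) * 2 := hT2 ▸ Dvd.intro _ rfl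
          exact Nat.Coprime.dvd_of_dvd_mul_right ((Nat.coprime_primes hp Nat.prime_two).2 hodd) this
        calc p ^ 2 = p * p := sq p
          _ ∣ (∑ j ∈ Finset.range p, j) * w := mul_dvd_mul hpT h1
    have hmod2 : S ≡ p [MOD p^2] := by
      have hd : p^2 ∣ w^2 := pow_dvd_pow_of_dvd h1 2
      have := hmod.of_dvd hd
      calc S ≡ p + (∑ j ∈ Finset.range p, j) * w [MOD p^2] := this
        _ ≡ p + 0 [MOD p^2] := (Nat.ModEq.refl _).add (Nat.modEq_zero_iff_dvd.2 hTw)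
        _ = p := by ring
    intro hdvd
    have : (p:ℕ) ≡ 0 [MOD p^2] := (hmod2.symm).trans (Nat.modEq_zero_iff_dvd.2 hdvd)
    have : p^2 ∣ p := Nat.modEq_zero_iff_dvd.1 this
    have := Nat.le_of_dvd (by omega) this
    nlinarith
  have hSf : S.factorization p ≤ 1 := by
    by_contra h
    exact hSp ((Nat.Prime.pow_dvd_iff_le_factorization hp hS0).2 (by omega))
  rw [hS, Nat.factorization_mul hw0 hS0]
  simp only [Finsupp.coe_add, Pi.add_apply]
  omega

lemma geom_sum_mod {p x m : ℕ} (hx1 : (1:ℕ) ≡ x [MOD p]) :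
    (m:ℕ) ≡ (∑ j ∈ Finset.range m, x ^ j) [MOD p] := by
  calc (m:ℕ) = ∑ _j ∈ Finset.range m, 1 := by simp
    _ ≡ (∑ j ∈ Finset.range m, x ^ j) [MOD p] :=
      modeq_sum _ _ _ (fun j _ => by simpa using hx1.pow j)

lemma val_le {p : ℕ} (hp : p.Prime) {x : ℕ} (hx : 2 ≤ x) (h1 : p ∣ x - 1) (h4 : p = 2 → 4 ∣ x - 1) :
    ∀ m, 1 ≤ m → (x ^ m - 1).factorization p ≤ (x - 1).factorization p + m.factorization p := by
  intro m
  induction m using Nat.strong_induction_on with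
  | _ m IH =>
    intro hm
    have hp2 := hp.two_le
    have hx1 : (1:ℕ) ≡ x [MOD p] := (Nat.modEq_iff_dvd' (by omega)).2 h1
    by_cases hpm : p ∣ m
    · obtain ⟨m', rfl⟩ := hpm
      have hm' : 1 ≤ m' := Nat.pos_of_ne_zero fun h => by subst h; simp at hm
      have hm'lt : m' < p * m' := by nlinarith
      set y := x ^ m' with hy
      have hy2 : 2 ≤ y := by
        calc 2 ≤ x := hx
          _ = x^1 := (pow_one x).symm
          _ ≤ x ^ m' := Nat.pow_le_pow_right (by omega) hm'
      have hy1 : (1:ℕ) ≡ y [MOD p] := by simpa using hx1.pow m'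
      have hy1' : p ∣ y - 1 := (Nat.modEq_iff_dvd' (by omega)).1 hy1
      have hy4 : p = 2 → 4 ∣ y - 1 := by
        intro h2
        have hx4 : (1:ℕ) ≡ x [MOD 4] := (Nat.modEq_iff_dvd' (by omega)).2 (h4 h2)
        exact (Nat.modEq_iff_dvd' (by omega)).1 (by simpa using hx4.pow m')
      have hstep := step_val hp hy2 hy1' hy4
      have hIH := IH m' hm'lt hm'
      rw [← hy] at hIH
      have hxpm : x ^ (p * m') = y ^ p := by rw [hy, ← pow_mul, mul_comm]
      have hfm : (p * m').factorization p = m'.factorization p + 1 := by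
        rw [Nat.factorization_mul (by omega) (by omega)]
        simp [hp.factorization]
        omega
      rw [hxpm, hfm]
      omega
    · -- p ∤ m : valuation equals that of x - 1
      have hgeom : x ^ m - 1 = (x - 1) * ∑ j ∈ Finset.range m, x ^ j := nat_geom x m (by omega)
      have hSm : ¬ p ∣ (∑ j ∈ Finset.range m, x ^ j) := by
        intro hd
        exact hpm ((Nat.modEq_zero_iff_dvd).1 ((geom_sum_mod hx1).trans (Nat.modEq_zero_iff_dvd.2 hd)))
      have hS0 : (∑ j ∈ Finset.range m, x ^ j) ≠ 0 := fun h => hSm (h ▸ dvd_zero p)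
      rw [hgeom, Nat.factorization_mul (by omega) hS0]
      simp only [Finsupp.coe_add, Pi.add_apply]
      rw [Nat.factorization_eq_zero_of_not_dvd hSm]
      omega

lemma val_coprime {p : ℕ} (hp : p.Prime) {x : ℕ} (hx : 2 ≤ x) (h1 : p ∣ x - 1) {m : ℕ}
    (hpm : ¬ p ∣ m) : (x ^ m - 1).factorization p = (x - 1).factorization p := by
  have hx1 : (1:ℕ) ≡ x [MOD p] := (Nat.modEq_iff_dvd' (by omega)).2 h1
  have hgeom : x ^ m - 1 = (x - 1) * ∑ j ∈ Finset.range m, x ^ j := nat_geom x m (by omega)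
  have hSm : ¬ p ∣ (∑ j ∈ Finset.range m, x ^ j) := by
    intro hd
    exact hpm ((Nat.modEq_zero_iff_dvd).1 ((geom_sum_mod hx1).trans (Nat.modEq_zero_iff_dvd.2 hd)))
  have hS0 : (∑ j ∈ Finset.range m, x ^ j) ≠ 0 := fun h => hSm (h ▸ dvd_zero p)
  rw [hgeom, Nat.factorization_mul (by omega) hS0]
  simp only [Finsupp.coe_add, Pi.add_apply]
  rw [Nat.factorization_eq_zero_of_not_dvd hSm]
  omega

lemma fact_mono {a c : ℕ} (h : a ∣ c) (hc : c ≠ 0) (p : ℕ) :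
    a.factorization p ≤ c.factorization p := by
  have ha : a ≠ 0 := fun h0 => hc (by simpa [h0] using h)
  exact Finsupp.le_def.1 ((Nat.factorization_le_iff_dvd ha hc).2 h) p

lemma dvd_pow_sub_one_iff {n b : ℕ} (hb : 1 ≤ b) (m : ℕ) :
    n ∣ b ^ m - 1 ↔ ((b : ZMod n)) ^ m = 1 := by
  have h1 : (1:ℕ) ≤ b ^ m := Nat.one_le_pow _ _ hb
  rw [← Nat.modEq_iff_dvd' h1]
  constructor
  · intro h
    have := (ZMod.natCast_eq_natCast_iff _ _ _).2 h.symm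
    push_cast at this
    simpa using this
  · intro h
    have : ((b ^ m : ℕ) : ZMod n) = ((1 : ℕ) : ZMod n) := by push_cast; simpa using h
    exact ((ZMod.natCast_eq_natCast_iff _ _ _).1 this).symm

lemma prime_val_bound {p b : ℕ} (hp : p.Prime) (hb : 2 ≤ b) (hpb : ¬ p ∣ b) :
    ∃ s : ℕ, ∀ n, 1 ≤ n → (b ^ n - 1).factorization p ≤ s + n.factorization p := by
  haveI : Fact p.Prime := ⟨hp⟩
  haveI : NeZero p := ⟨hp.ne_zero⟩
  by_cases h2 : p = 2
  · subst h2
    have hbodd : ¬ 2 ∣ b := hpb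
    have hb1 : 2 ∣ b - 1 := by omega
    have hb4 : (4:ℕ) ∣ b ^ 2 - 1 := by
      obtain ⟨c, hc⟩ : ∃ c, b = 2*c+1 := ⟨b/2, by omega⟩
      have : b ^ 2 = 4*(c*(c+1)) + 1 := by subst hc; ring
      have h4 : b ^ 2 - 1 = 4*(c*(c+1)) := by omega
      exact h4 ▸ Dvd.intro _ rfl
    have hb21 : 2 ∣ b ^ 2 - 1 := dvd_trans (by norm_num) hb4
    refine ⟨(b ^ 2 - 1).factorization 2, fun n hn => ?_⟩
    rcases Nat.even_or_odd n with he | ho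
    · obtain ⟨n', hn'⟩ := he
      have hneq : n = 2 * n' := by omega
      have hn'1 : 1 ≤ n' := by omega
      have hx2 : 2 ≤ b ^ 2 := by nlinarith
      have := val_le Nat.prime_two hx2 hb21 (fun _ => hb4) n' hn'1
      have hpow : b ^ n = (b ^ 2) ^ n' := by rw [hneq, pow_mul]
      rw [hpow]
      refine le_trans this (Nat.add_le_add_left ?_ _)
      exact fact_mono ⟨2, by omega⟩ (by omega) 2
    · have hmod := Nat.odd_iff.1 ho
      have hno2 : ¬ 2 ∣ n := by omega
      rw [val_coprime Nat.prime_two hb hb1 hno2]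
      have hbsq : 4 ≤ b ^ 2 := by nlinarith
      have hdvd : b ^ 2 - 1 = (b - 1) * (b + 1) := by
        zify [show (1:ℕ) ≤ b ^ 2 by omega, show (1:ℕ) ≤ b by omega]
        ring
      have : (b-1:ℕ).factorization 2 ≤ (b^2-1).factorization 2 :=
        fact_mono ⟨b+1, hdvd⟩ (by omega) 2
      omega
  · -- odd p
    have hco : Nat.Coprime b p := Nat.coprime_comm.1 ((hp.coprime_iff_not_dvd).2 hpb)
    set u : (ZMod p)ˣ := ZMod.unitOfCoprime b hco with hu
    set t := orderOf u with ht
    have ht1 : 1 ≤ t := orderOf_pos u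
    have hut : ((b : ZMod p)) ^ t = 1 := by
      have := pow_orderOf_eq_one u
      have h2' := congrArg (Units.val) this
      push_cast at h2'
      simpa [hu, ZMod.coe_unitOfCoprime] using h2'
    have hbt : p ∣ b ^ t - 1 := (dvd_pow_sub_one_iff (by omega) t).2 hut
    refine ⟨(b ^ t - 1).factorization p, fun n hn => ?_⟩
    by_cases hd : p ∣ b ^ n - 1
    · have hbn : ((b : ZMod p)) ^ n = 1 := (dvd_pow_sub_one_iff (by omega) n).1 hd
      have hun : u ^ n = 1 := by
        ext
        push_cast
        simpa [hu, ZMod.coe_unitOfCoprime] using hbn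
      obtain ⟨m, hm⟩ := orderOf_dvd_iff_pow_eq_one.2 hun
      have hm1 : 1 ≤ m := Nat.pos_of_ne_zero fun h0 => by subst h0; simp at hm; omega
      have hxt : 2 ≤ b ^ t := by
        calc 2 ≤ b := hb
          _ = b^1 := (pow_one b).symm
          _ ≤ b ^ t := Nat.pow_le_pow_right (by omega) ht1
      have := val_le hp hxt hbt (fun h => absurd h h2) m hm1
      have hpow : b ^ n = (b ^ t) ^ m := by rw [hm, pow_mul]
      rw [hpow]
      refine le_trans this (Nat.add_le_add_left ?_ _)
      exact fact_mono ⟨t, by rw [hm]; ring⟩ (by omega) p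
    · rw [Nat.factorization_eq_zero_of_not_dvd hd]
      omega

lemma prod_pow_fact_dvd (S : Finset ℕ) (hSp : ∀ p ∈ S, Nat.Prime p) (n : ℕ) (hn : 1 ≤ n) :
    (∏ p ∈ S, p ^ n.factorization p) ∣ n := by
  have hZ0 : (∏ p ∈ S, p ^ n.factorization p) ≠ 0 :=
    Finset.prod_ne_zero_iff.2 (fun p hp => pow_ne_zero _ (hSp p hp).pos.ne')
  rw [← Nat.factorization_le_iff_dvd hZ0 (by omega)]
  have hfac : (∏ p ∈ S, p ^ n.factorization p).factorization
      = ∑ p ∈ S, (Finsupp.single p (n.factorization p)) := by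
    rw [Nat.factorization_prod (fun p hp => pow_ne_zero _ (hSp p hp).pos.ne')]
    exact Finset.sum_congr rfl (fun p hp => (hSp p hp).factorization_pow)
  rw [hfac]
  rw [Finsupp.le_def]
  intro q
  rw [Finsupp.finset_sum_apply]
  by_cases hq : q ∈ S
  · rw [Finset.sum_eq_single q (fun p _ hpq => Finsupp.single_eq_of_ne' hpq) (fun h => absurd hq h)]
    simp
  · have : ∀ p ∈ S, (Finsupp.single p (n.factorization p)) q = 0 := fun p hp =>
      Finsupp.single_eq_of_ne' (fun h => hq (h ▸ hp))
    rw [Finset.sum_congr rfl this]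
    simp

lemma sunit_bound {b : ℕ} (hb : 2 ≤ b) (S : Finset ℕ) (hSp : ∀ p ∈ S, Nat.Prime p ∧ ¬ p ∣ b) :
    ∃ C : ℕ, 1 ≤ C ∧ ∀ d, 1 ≤ d → (∀ p, p.Prime → p ∣ d → p ∈ S) →
      ∀ n, 1 ≤ n → d ∣ b ^ n - 1 → d ≤ C * n := by
  have hP : ∀ p : ℕ, ∃ s : ℕ, p ∈ S → ∀ n, 1 ≤ n →
      (b^n-1).factorization p ≤ s + n.factorization p := by
    intro p
    by_cases hpS : p ∈ S
    · obtain ⟨s, hs⟩ := prime_val_bound (hSp p hpS).1 hb (hSp p hpS).2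
      exact ⟨s, fun _ => hs⟩
    · exact ⟨0, fun h => absurd h hpS⟩
  choose s hs using hP
  refine ⟨∏ p ∈ S, p ^ s p, Finset.one_le_prod' (fun p hp => Nat.one_le_pow _ _ (hSp p hp).1.pos),
    fun d hd hdS n hn hdvd => ?_⟩
  have hd0 : d ≠ 0 := by omega
  have hbn1 : 1 ≤ b ^ n := Nat.one_le_pow _ _ (by omega)
  have hbn : 2 ≤ b ^ n := by
    calc 2 ≤ b := hb
      _ = b ^ 1 := (pow_one b).symm
      _ ≤ b ^ n := Nat.pow_le_pow_right (by omega) hn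
  have hbn0 : b ^ n - 1 ≠ 0 := by omega
  have hsub : d.factorization.support ⊆ S := by
    intro p hp
    rw [Nat.support_factorization] at hp
    obtain ⟨hpp, hpd, _⟩ := Nat.mem_primeFactors.1 hp
    exact hdS p hpp hpd
  have hdprod : d = ∏ p ∈ S, p ^ d.factorization p := by
    conv_lhs => rw [← Nat.factorization_prod_pow_eq_self hd0]
    exact Finsupp.prod_of_support_subset _ hsub _ (fun p _ => pow_zero p)
  have hle : d ≤ ∏ p ∈ S, p ^ (s p + n.factorization p) := by
    rw [hdprod]
    refine Finset.prod_le_prod' (fun p hp => Nat.pow_le_pow_right (hSp p hp).1.pos ?_)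
    calc d.factorization p ≤ (b ^ n - 1).factorization p := fact_mono hdvd hbn0 p
      _ ≤ s p + n.factorization p := hs p hp n hn
  have hsplit : (∏ p ∈ S, p ^ (s p + n.factorization p))
      = (∏ p ∈ S, p ^ s p) * (∏ p ∈ S, p ^ n.factorization p) := by
    rw [← Finset.prod_mul_distrib]
    exact Finset.prod_congr rfl (fun p _ => pow_add p _ _)
  have hZ : (∏ p ∈ S, p ^ n.factorization p) ∣ n :=
    prod_pow_fact_dvd S (fun p hp => (hSp p hp).1) n hn
  have hZle : (∏ p ∈ S, p ^ n.factorization p) ≤ n := Nat.le_of_dvd (by omega) hZ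
  calc d ≤ (∏ p ∈ S, p ^ s p) * (∏ p ∈ S, p ^ n.factorization p) := by rw [← hsplit]; exact hle
    _ ≤ (∏ p ∈ S, p ^ s p) * n := Nat.mul_le_mul_left _ hZle

lemma tb_step (b : ℕ) (x : ℝ) : Tb b (Int.fract x) = Int.fract ((b:ℝ) * x) := by
  unfold Tb
  have h : (b:ℝ) * Int.fract x = b * x - ((b * ⌊x⌋ : ℤ) : ℝ) := by
    rw [Int.fract]; push_cast; ring
  rw [h, Int.fract_sub_intCast]

lemma tb_iter (b : ℕ) (x : ℝ) (n : ℕ) : (Tb b)^[n] (Int.fract x) = Int.fract ((b:ℝ)^n * x) := by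
  induction n generalizing x with
  | zero => simp
  | succ n ih =>
    rw [Function.iterate_succ_apply, tb_step, ih (b * x)]
    ring_nf

lemma fract_nat_div (m N : ℕ) (hN : 0 < N) :
    Int.fract ((m:ℝ)/N) = ((m % N : ℕ) : ℝ)/N := by
  have h := Nat.div_add_mod m N
  have hcast : (m:ℝ)/N = (m / N : ℕ) + ((m % N : ℕ) : ℝ)/N := by
    have hNr : (N:ℝ) ≠ 0 := by exact_mod_cast hN.ne'
    field_simp
    exact_mod_cast (Nat.div_add_mod m N).symm
  rw [hcast, add_comm, Int.fract_add_natCast]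
  refine Int.fract_eq_self.2 ⟨by positivity, ?_⟩
  rw [div_lt_one (by exact_mod_cast hN)]
  exact_mod_cast Nat.mod_lt m hN

lemma digit_eq {Q N r : ℕ} (k m : ℕ) (hQ : 0 < Q) (hN : 0 < N) (hm : m < k) :
    r * Q ^ k / N / Q ^ m % Q = Q * (Q ^ (k - 1 - m) * r % N) / N := by
  set g := k - 1 - m with hg
  have hk : k = g + 1 + m := by omega
  have h1 : r * Q ^ k / N / Q ^ m = Q ^ g * r * Q / N := by
    rw [Nat.div_div_eq_div_mul]
    rw [hk, pow_add, pow_succ]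
    rw [show r * (Q ^ g * Q * Q ^ m) = (Q ^ g * r * Q) * Q ^ m by ring]
    exact Nat.mul_div_mul_right _ _ (pow_pos hQ m)
  rw [h1]
  have h2 := Nat.div_add_mod (Q ^ g * r) N
  set s := Q ^ g * r % N with hs
  set q := Q ^ g * r / N with hq
  have h3 : Q ^ g * r * Q = s * Q + (q * Q) * N := by
    rw [← h2]; ring
  rw [h3, Nat.add_mul_div_right _ _ hN, Nat.add_mul_mod_self_right]
  have hlt : s * Q / N < Q := by
    rw [Nat.div_lt_iff_lt_mul hN]
    have hsN : s < N := Nat.mod_lt _ hN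
    calc s * Q < N * Q := by exact (Nat.mul_lt_mul_right hQ).2 hsN
      _ = Q * N := mul_comm _ _
  rw [Nat.mod_eq_of_lt hlt, mul_comm s Q]

open Finset in
lemma card_avoid {Q j : ℕ} (hQ : 2 ≤ Q) (hj : j < Q) :
    ∀ k, ((Finset.range (Q^k)).filter (fun c => ∀ m < k, c / Q^m % Q ≠ j)).card ≤ (Q-1)^k := by
  intro k
  induction k with
  | zero =>
    simpa using Finset.card_filter_le (Finset.range (Q^0)) _
  | succ k ih =>
    set Dk := (Finset.range (Q^k)).filter (fun c => ∀ m < k, c / Q^m % Q ≠ j) with hDk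
    set Dk1 := (Finset.range (Q^(k+1))).filter (fun c => ∀ m < k+1, c / Q^m % Q ≠ j) with hDk1
    have hmap : ∀ c ∈ Dk1, (c / Q, c % Q) ∈ Dk ×ˢ ((Finset.range Q).erase j) := by
      intro c hc
      rw [hDk1, Finset.mem_filter, Finset.mem_range] at hc
      obtain ⟨hlt, hdig⟩ := hc
      refine Finset.mem_product.2 ⟨?_, ?_⟩
      · rw [hDk, Finset.mem_filter, Finset.mem_range]
        constructor
        · rw [Nat.div_lt_iff_lt_mul (by omega)]
          calc c < Q^(k+1) := hlt
            _ = Q^k * Q := pow_succ _ _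
        · intro m hm
          rw [Nat.div_div_eq_div_mul, ← pow_succ']
          exact hdig (m+1) (by omega)
      · refine Finset.mem_erase.2 ⟨?_, Finset.mem_range.2 (Nat.mod_lt _ (by omega))⟩
        have := hdig 0 (by omega)
        simpa using this
    have hinj : Set.InjOn (fun c => (c / Q, c % Q)) Dk1 := by
      intro c1 h1 c2 h2 he
      simp only [Prod.mk.injEq] at he
      calc c1 = Q * (c1/Q) + c1 % Q := (Nat.div_add_mod c1 Q).symm
        _ = Q * (c2/Q) + c2 % Q := by rw [he.1, he.2]
        _ = c2 := Nat.div_add_mod c2 Q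
    have hcard := Finset.card_le_card_of_injOn _ hmap hinj
    calc Dk1.card ≤ (Dk ×ˢ ((Finset.range Q).erase j)).card := hcard
      _ = Dk.card * ((Finset.range Q).erase j).card := Finset.card_product _ _
      _ ≤ (Q-1)^k * (Q-1) := by
          refine Nat.mul_le_mul ih ?_
          rw [Finset.card_erase_of_mem (Finset.mem_range.2 hj), Finset.card_range]
      _ = (Q-1)^(k+1) := (pow_succ _ _).symm

lemma main_count {Q j N : ℕ} (hQ : 2 ≤ Q) (hj : j < Q) (hN : 2 ≤ N) (k : ℕ) (hk : N ≤ Q^k)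
    (R : Finset ℕ) (hR : ∀ r ∈ R, r < N ∧ ∀ g, Q * (Q ^ g * r % N) / N ≠ j) :
    R.card ≤ 2 * (Q-1)^k := by
  classical
  have hN0 : 0 < N := by omega
  set ψ : ℕ → ℕ := fun r => r * Q^k / N with hψ
  set Dk := (Finset.range (Q^k)).filter (fun c => ∀ m < k, c / Q^m % Q ≠ j) with hDk
  have himg : ∀ r ∈ R, ψ r ∈ Dk := by
    intro r hr
    obtain ⟨hrN, havoid⟩ := hR r hr
    rw [hDk, Finset.mem_filter, Finset.mem_range]
    constructor
    · rw [hψ]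
      simp only
      rw [Nat.div_lt_iff_lt_mul hN0]
      calc r * Q^k < N * Q^k := by exact (Nat.mul_lt_mul_right (pow_pos (by omega) k)).2 hrN
        _ = Q^k * N := mul_comm _ _
    · intro m hm
      rw [hψ]
      simp only
      rw [digit_eq k m (by omega) hN0 hm]
      exact havoid _
  have hfib : ∀ a ∈ R.image ψ, (R.filter (fun x => ψ x = a)).card ≤ 2 := by
    intro a _
    set F := R.filter (fun x => ψ x = a) with hF
    rcases Finset.eq_empty_or_nonempty F with he | hne
    · simp [he]
    · have hbound : ∀ r ∈ F, r ≤ F.min' hne + 1 := by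
        intro r2 hr2
        set r1 := F.min' hne with hr1
        have hr1F : r1 ∈ F := Finset.min'_mem _ _
        have h12 : r1 ≤ r2 := Finset.min'_le _ _ hr2
        rw [hF, Finset.mem_filter] at hr1F hr2
        have ha1 : a * N ≤ r1 * Q^k := by
          have := hr1F.2
          rw [hψ] at this; simp only at this
          rw [← Nat.le_div_iff_mul_le hN0, this]
        have ha2 : r2 * Q^k < (a+1) * N := by
          have := hr2.2
          rw [hψ] at this; simp only at this
          have hlt : r2 * Q^k / N < a + 1 := by omega
          rwa [Nat.div_lt_iff_lt_mul hN0] at hlt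
        by_contra hcon
        have hge : r1 + 2 ≤ r2 := by omega
        have : (r1 + 2) * Q^k ≤ r2 * Q^k := Nat.mul_le_mul_right _ hge
        have hexp : (r1+2) * Q^k = r1 * Q^k + 2 * Q^k := by ring
        have h2N : 2 * N ≤ 2 * Q^k := by omega
        nlinarith
      have hsub : F ⊆ Finset.Icc (F.min' hne) (F.min' hne + 1) := by
        intro r hr
        exact Finset.mem_Icc.2 ⟨Finset.min'_le _ _ hr, hbound r hr⟩
      calc F.card ≤ (Finset.Icc (F.min' hne) (F.min' hne + 1)).card := Finset.card_le_card hsub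
        _ = 2 := by rw [Nat.card_Icc]; omega
  calc R.card ≤ 2 * (R.image ψ).card := Finset.card_le_mul_card_image (f := ψ) R 2 hfib
    _ ≤ 2 * Dk.card := by
        have : R.image ψ ⊆ Dk := Finset.image_subset_iff.2 himg
        exact Nat.mul_le_mul_left _ (Finset.card_le_card this)
    _ ≤ 2 * (Q-1)^k := Nat.mul_le_mul_left _ (card_avoid hQ hj k)

set_option maxHeartbeats 1000000 in
theorem stmt14 (b : ℕ) (hb : 2 ≤ b) (S : Finset ℕ) (hS : S.Nonempty)
    (hSp : ∀ p ∈ S, Nat.Prime p ∧ ¬ p ∣ b)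
    (a' d' : ℕ) (ha'd' : Nat.Coprime a' d') (h01' : a' < d')
    (ε : ℝ) (hε : 0 < ε) :
    ∃ D : ℝ, D > 0 ∧ ∀ a d : ℕ, Nat.Coprime a d → a < d →
      (∀ p : ℕ, p.Prime → p ∣ d → p ∈ S) →
      Nat.Coprime (a * a') (d * d') → (d : ℝ) > D →
      ∀ x ∈ Set.Icc (0 : ℝ) 1, ∃ i : ℕ,
        |x - (Tb b)^[i] (((a * a' : ℕ) : ℝ) / ((d * d' : ℕ) : ℝ))| ≤ ε := by
  classical
  obtain ⟨C, hC1, hCb⟩ := sunit_bound hb S hSp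
  obtain ⟨L₀, hL₀⟩ := pow_unbounded_of_one_lt (1/ε) (by norm_num : (1:ℝ) < 2)
  set L := L₀ + 2 with hL
  set Q := b ^ L with hQdef
  have hQ4 : 4 ≤ Q := by
    calc (4:ℕ) = 2^2 := by norm_num
      _ ≤ 2^L := Nat.pow_le_pow_right (by norm_num) (by omega)
      _ ≤ b^L := Nat.pow_le_pow_left hb L
  have hQ'cast : ((Q:ℕ):ℝ) = (b:ℝ)^L := by rw [hQdef]; push_cast; ring
  have hQ'4 : (4:ℝ) ≤ (Q:ℝ) := by exact_mod_cast hQ4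
  have hQ'0 : (0:ℝ) < (Q:ℝ) := by linarith
  have hQε : 1/(Q:ℝ) ≤ ε := by
    have h2L : (2:ℝ)^L₀ ≤ (Q:ℝ) := by
      rw [hQ'cast]
      calc (2:ℝ)^L₀ ≤ (2:ℝ)^L := by
            apply pow_le_pow_right₀ (by norm_num) (by omega)
        _ ≤ (b:ℝ)^L := by
            apply pow_le_pow_left₀ (by norm_num) (by exact_mod_cast hb)
    have hlt : 1/ε < (Q:ℝ) := lt_of_lt_of_le hL₀ h2L
    rw [div_le_iff₀ hQ'0]
    have := (div_lt_iff₀ hε).1 hlt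
    nlinarith
  set θ := Real.logb (Q:ℝ) ((Q:ℝ) - 1) with hθdef
  have hQ'1 : (1:ℝ) < Q := by linarith
  have hθ0 : 0 < θ := Real.logb_pos hQ'1 (by linarith)
  have hθ1 : θ < 1 := by
    have h := Real.logb_lt_logb hQ'1 (by linarith : (0:ℝ) < (Q:ℝ) - 1)
      (by linarith : (Q:ℝ) - 1 < (Q:ℝ))
    rwa [Real.logb_self_eq_one hQ'1] at h
  have h1θ : 0 < 1 - θ := by linarith
  have hd'1 : 1 ≤ d' := by omega
  have hC0 : (0:ℝ) < C := by exact_mod_cast hC1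
  have hd'0 : (0:ℝ) < (d':ℝ) := by exact_mod_cast hd'1
  set X := 2*(C:ℝ)*((Q:ℝ) - 1)*(d':ℝ)^θ with hX
  have hX0 : (0:ℝ) < X := by
    have := Real.rpow_pos_of_pos hd'0 θ
    rw [hX]
    exact mul_pos (mul_pos (by linarith : (0:ℝ) < 2*(C:ℝ)) (by linarith : (0:ℝ) < (Q:ℝ)-1)) this
  refine ⟨max 1 (X ^ ((1:ℝ)/(1-θ))), lt_of_lt_of_le one_pos (le_max_left _ _), ?_⟩
  intro a d hcop had hfacS hcopN hdD x hx
  have hD1 : (1:ℝ) ≤ max 1 (X ^ ((1:ℝ)/(1-θ))) := le_max_left _ _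
  have hd1R : (1:ℝ) < d := lt_of_le_of_lt hD1 hdD
  have hd2 : 2 ≤ d := by
    have : (1:ℕ) < d := by exact_mod_cast hd1R
    omega
  have ha' : a' ≠ 0 := by
    intro h0
    rw [h0, mul_zero] at hcopN
    have h1 : d * d' = 1 := (Nat.coprime_zero_left _).1 hcopN
    have h2 : d ≤ d * d' := Nat.le_mul_of_pos_right d (by omega)
    omega
  set A := a * a' with hA
  set N := d * d' with hN
  by_contra hcon
  push_neg at hcon
  have hN2 : 2 ≤ N := by
    calc 2 ≤ d := hd2
      _ = d * 1 := (mul_one d).symm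
      _ ≤ N := Nat.mul_le_mul_left d hd'1
  have hN0 : 0 < N := by omega
  have hAN : A < N := by
    calc A = a * a' := rfl
      _ ≤ (d-1) * d' := Nat.mul_le_mul (by omega) (by omega)
      _ < d * d' := (Nat.mul_lt_mul_right (by omega)).2 (by omega)
  have hbd : Nat.Coprime b d := by
    by_contra hnc
    obtain ⟨p, hp, hpb, hpd⟩ := Nat.Prime.not_coprime_iff_dvd.1 hnc
    exact (hSp p (hfacS p hp hpd)).2 hpb
  haveI : NeZero d := ⟨by omega⟩
  set u : (ZMod d)ˣ := ZMod.unitOfCoprime b hbd with hu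
  set t := orderOf u with ht
  have ht1 : 1 ≤ t := orderOf_pos u
  have hut : ((b : ZMod d)) ^ t = 1 := by
    have h2' := congrArg (Units.val) (pow_orderOf_eq_one u)
    push_cast at h2'
    simpa [hu, ZMod.coe_unitOfCoprime] using h2'
  have hbt : d ∣ b ^ t - 1 := (dvd_pow_sub_one_iff (by omega) t).2 hut
  have hdt : d ≤ C * t := hCb d (by omega) hfacS t ht1 hbt
  have hex : ∃ k, N ≤ Q ^ k := ⟨N, le_of_lt (Nat.lt_pow_self (n := N) (a := Q) (by omega))⟩
  set k := Nat.find hex with hk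
  have hQk : N ≤ Q ^ k := Nat.find_spec hex
  have hk1 : 1 ≤ k := by
    rcases Nat.eq_zero_or_pos k with h0 | h
    · exfalso; rw [h0] at hQk; simp at hQk; omega
    · exact h
  have hQk1 : Q ^ (k-1) < N := by
    have := Nat.find_min hex (show k - 1 < k by omega)
    omega
  set j := min (⌊x * (Q:ℝ)⌋₊) (Q - 1) with hj
  have hjQ : j < Q := by
    have : j ≤ Q - 1 := min_le_right _ _
    omega
  have hx0 : 0 ≤ x := hx.1
  have hx1 : x ≤ 1 := hx.2
  have hxj : (j:ℝ) ≤ x * (Q:ℝ) ∧ x * (Q:ℝ) ≤ (j:ℝ) + 1 := by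
    rcases le_or_gt (⌊x * (Q:ℝ)⌋₊) (Q-1) with hc | hc
    · have hjeq : j = ⌊x * (Q:ℝ)⌋₊ := min_eq_left hc
      constructor
      · rw [hjeq]; exact Nat.floor_le (by positivity)
      · rw [hjeq]; exact (Nat.lt_floor_add_one _).le
    · have hjeq : j = Q - 1 := min_eq_right (by omega)
      have hfl : (Q:ℝ) ≤ x * (Q:ℝ) := by
        have h1 : (Q:ℕ) ≤ ⌊x*(Q:ℝ)⌋₊ := by omega
        calc (Q:ℝ) ≤ (⌊x*(Q:ℝ)⌋₊ : ℝ) := by exact_mod_cast h1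
          _ ≤ x * (Q:ℝ) := Nat.floor_le (by positivity)
      have hxQ : x * (Q:ℝ) ≤ (Q:ℝ) := by nlinarith
      constructor
      · rw [hjeq]; push_cast [Nat.cast_sub (by omega : 1 ≤ Q)]; linarith
      · rw [hjeq]; push_cast [Nat.cast_sub (by omega : 1 ≤ Q)]; linarith
  have horbit : ∀ m : ℕ, Q * (A * b ^ m % N) / N ≠ j := by
    intro m hjm
    set r := A * b ^ m % N with hr
    have hrN : r < N := Nat.mod_lt _ hN0
    have hyiter : (Tb b)^[m] ((A:ℝ)/(N:ℝ)) = (r:ℝ)/(N:ℝ) := by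
      have h1 : Int.fract ((A:ℝ)/(N:ℝ)) = (A:ℝ)/(N:ℝ) := by
        refine Int.fract_eq_self.2 ⟨by positivity, ?_⟩
        rw [div_lt_one (by exact_mod_cast hN0)]
        exact_mod_cast hAN
      have h2 := tb_iter b ((A:ℝ)/(N:ℝ)) m
      rw [h1] at h2
      have h3 : (b:ℝ)^m * ((A:ℝ)/(N:ℝ)) = ((A * b^m : ℕ):ℝ)/(N:ℝ) := by push_cast; ring
      rw [h2, h3, fract_nat_div _ _ hN0]
    have hfloor : ⌊(Q:ℝ) * ((r:ℝ)/(N:ℝ))⌋₊ = Q * r / N := by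
      have heq : (Q:ℝ) * ((r:ℝ)/(N:ℝ)) = ((Q*r : ℕ):ℝ)/((N:ℕ):ℝ) := by push_cast; ring
      rw [heq, Nat.floor_div_eq_div]
    have hval0 : (0:ℝ) ≤ (Q:ℝ) * ((r:ℝ)/(N:ℝ)) := by positivity
    have hyl : (j:ℝ) ≤ (Q:ℝ) * ((r:ℝ)/(N:ℝ)) := by
      rw [← hjm, ← hfloor]
      exact Nat.floor_le hval0
    have hyu : (Q:ℝ) * ((r:ℝ)/(N:ℝ)) < (j:ℝ) + 1 := by
      rw [← hjm, ← hfloor]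
      push_cast
      exact Nat.lt_floor_add_one _
    have hdist : |x - (r:ℝ)/(N:ℝ)| ≤ 1/(Q:ℝ) := by
      rw [abs_sub_le_iff]
      constructor
      · rw [le_div_iff₀ hQ'0]
        have e1 : (x - (r:ℝ)/(N:ℝ))*(Q:ℝ) = x*(Q:ℝ) - (Q:ℝ)*((r:ℝ)/(N:ℝ)) := by ring
        linarith [hxj.2, hyl]
      · rw [le_div_iff₀ hQ'0]
        have e1 : ((r:ℝ)/(N:ℝ) - x)*(Q:ℝ) = (Q:ℝ)*((r:ℝ)/(N:ℝ)) - x*(Q:ℝ) := by ring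
        linarith [hyu, hxj.1]
    have hε' := hcon m
    rw [hyiter] at hε'
    linarith [abs_nonneg (x - (r:ℝ)/(N:ℝ))]
  have hAd : Nat.Coprime A d := Nat.Coprime.coprime_dvd_right (dvd_mul_right d d') hcopN
  set uA : (ZMod d)ˣ := ZMod.unitOfCoprime A hAd with huA
  set R := (Finset.range t).image (fun i => A * b ^ i % N) with hRdef
  have hRcard : R.card = t := by
    rw [hRdef, Finset.card_image_of_injOn, Finset.card_range]
    intro i1 h1 i2 h2 he
    simp only [Finset.coe_range, Set.mem_Iio] at h1 h2
    have hmodN : A * b ^ i1 ≡ A * b ^ i2 [MOD N] := he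
    have hmodd : A * b ^ i1 ≡ A * b ^ i2 [MOD d] := hmodN.of_dvd (dvd_mul_right d d')
    have hzmod := (ZMod.natCast_eq_natCast_iff _ _ _).2 hmodd
    push_cast at hzmod
    have hcoeA : ((uA : ZMod d)) = (A : ZMod d) := ZMod.coe_unitOfCoprime _ _
    have hcan : ((b:ZMod d))^i1 = ((b:ZMod d))^i2 := by
      apply (Units.mul_right_inj uA).1
      rw [hcoeA]; exact hzmod
    have hucan : u ^ i1 = u ^ i2 := by
      ext
      push_cast
      simpa [hu, ZMod.coe_unitOfCoprime] using hcan
    exact pow_injOn_Iio_orderOf (Set.mem_Iio.2 h1) (Set.mem_Iio.2 h2) hucan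
  have hRprop : ∀ r ∈ R, r < N ∧ ∀ g, Q * (Q ^ g * r % N) / N ≠ j := by
    intro r hrR
    rw [hRdef, Finset.mem_image] at hrR
    obtain ⟨i, hi, hieq⟩ := hrR
    refine ⟨hieq ▸ Nat.mod_lt _ hN0, fun g => ?_⟩
    have hmod : Q ^ g * r % N = A * b ^ (i + L * g) % N := by
      calc Q ^ g * r % N = Q ^ g * (A * b ^ i) % N := by
            rw [← hieq]
            exact (Nat.mod_modEq (A * b ^ i) N).mul_left (Q^g)
        _ = A * b ^ (i + L*g) % N := by
            rw [hQdef, ← pow_mul, pow_add]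
            ring_nf
    rw [hmod]
    exact horbit (i + L * g)
  have hcount : t ≤ 2 * (Q-1)^k := by
    rw [← hRcard]
    exact main_count (by omega) hjQ hN2 k hQk R hRprop
  have hdk : (d:ℝ) ≤ 2 * (C:ℝ) * ((Q:ℝ) - 1)^k := by
    have h1 : d ≤ C * (2 * (Q-1)^k) := le_trans hdt (Nat.mul_le_mul_left C hcount)
    have h2 : (d:ℝ) ≤ (C:ℝ) * (2 * (((Q-1:ℕ)):ℝ)^k) := by exact_mod_cast h1
    rw [Nat.cast_sub (by omega : 1 ≤ Q)] at h2
    push_cast at h2 ⊢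
    linarith
  have hQθ : (Q:ℝ) ^ θ = (Q:ℝ) - 1 :=
    Real.rpow_logb hQ'0 (by linarith : (Q:ℝ) ≠ 1) (by linarith)
  have hQk1R : ((Q:ℝ))^(k-1) < (N:ℝ) := by exact_mod_cast hQk1
  have hd0R : (0:ℝ) < (d:ℝ) := by linarith
  have hpow1 : ((Q:ℝ) - 1)^(k-1) < ((N:ℝ))^θ := by
    calc ((Q:ℝ)-1)^(k-1) = (((Q:ℝ))^θ)^(k-1) := by rw [hQθ]
      _ = (((Q:ℝ))^((k-1:ℕ):ℝ))^θ := by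
          rw [← Real.rpow_natCast ((Q:ℝ)^θ) (k-1), ← Real.rpow_mul (le_of_lt hQ'0),
            mul_comm, Real.rpow_mul (le_of_lt hQ'0)]
      _ = (((Q:ℝ))^(k-1:ℕ))^θ := by rw [Real.rpow_natCast]
      _ < ((N:ℝ))^θ := Real.rpow_lt_rpow (by positivity) hQk1R hθ0
  have hNθ : ((N:ℝ))^θ = (d:ℝ)^θ * (d':ℝ)^θ := by
    rw [hN]
    push_cast
    exact Real.mul_rpow (by positivity) (by positivity)
  have hdd : (d:ℝ) < 2*(C:ℝ)*((Q:ℝ)-1) * ((N:ℝ))^θ := by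
    have hsplit : ((Q:ℝ)-1)^k = ((Q:ℝ)-1) * ((Q:ℝ)-1)^(k-1) := by
      conv_lhs => rw [show k = (k-1) + 1 by omega]
      rw [pow_succ]
      ring
    calc (d:ℝ) ≤ 2*(C:ℝ)*((Q:ℝ)-1)^k := hdk
      _ = 2*(C:ℝ)*((Q:ℝ)-1) * ((Q:ℝ)-1)^(k-1) := by rw [hsplit]; ring
      _ < 2*(C:ℝ)*((Q:ℝ)-1) * (N:ℝ)^θ := by
          have hc0 : (0:ℝ) < 2*(C:ℝ)*((Q:ℝ)-1) := by nlinarith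
          exact mul_lt_mul_of_pos_left hpow1 hc0
  have hfinal1 : (d:ℝ)^(1-θ) < X := by
    have hdθ : (0:ℝ) < (d:ℝ)^θ := Real.rpow_pos_of_pos hd0R θ
    have hsplitd : (d:ℝ) = (d:ℝ)^θ * (d:ℝ)^(1-θ) := by
      rw [← Real.rpow_add hd0R]
      norm_num
    rw [hNθ] at hdd
    have h2 : (d:ℝ)^(1-θ) * (d:ℝ)^θ < X * (d:ℝ)^θ := by
      rw [hX]
      calc (d:ℝ)^(1-θ) * (d:ℝ)^θ = (d:ℝ) := by rw [mul_comm, ← hsplitd]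
        _ < 2*(C:ℝ)*((Q:ℝ)-1) * ((d:ℝ)^θ * (d':ℝ)^θ) := hdd
        _ = 2*(C:ℝ)*((Q:ℝ)-1)*(d':ℝ)^θ * (d:ℝ)^θ := by ring
    exact (mul_lt_mul_iff_of_pos_right hdθ).1 h2
  have hfinal2 : X ≤ (d:ℝ)^(1-θ) := by
    have h1 : X ^ ((1:ℝ)/(1-θ)) ≤ max 1 (X ^ ((1:ℝ)/(1-θ))) := le_max_right _ _
    have h2 : (X ^ ((1:ℝ)/(1-θ)))^(1-θ) ≤ (d:ℝ)^(1-θ) :=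
      Real.rpow_le_rpow (Real.rpow_nonneg (le_of_lt hX0) _)
        (le_trans h1 (le_of_lt hdD)) (le_of_lt h1θ)
    have h3 : ((1:ℝ)/(1-θ))*(1-θ) = 1 := by field_simp
    rwa [← Real.rpow_mul (le_of_lt hX0), h3, Real.rpow_one] at h2
  linarith
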